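/- Let M ≥ 1 be a constant, μ a probability measure on a measurable space, and f a measurable function with 0 ≤ f ≤ M, with f > 0 μ-a.e. and ∫ f dμ > 0. Set g = ln f − ∫ ln f dμ. Then |ln(∫ f dμ) − ∫ ln f dμ| ≤ M · (∫ g² dμ)^{1/2} / ∫ f dμ. -/

import Mathlib

open MeasureTheory Real

/-- Nash-type inequality: for a probability measure `μ` and `0 ≤ f ≤ M` with `f > 0` a.e.
and `∫ f dμ > 0`, setting `g = ln f − ∫ ln f dμ`, we have
`|ln ∫ f dμ − ∫ ln f dμ| ≤ M ‖g‖_{L²(μ)} / ∫ f dμ`. -/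
theorem stmt_1 {Ω : Type*} [MeasurableSpace Ω] (μ : Measure Ω) [IsProbabilityMeasure μ]
    (M : ℝ) (hM : 1 ≤ M) (f : Ω → ℝ) (hfm : Measurable f)
    (hf0 : 0 ≤ᵐ[μ] f) (hfM : ∀ᵐ x ∂μ, f x ≤ M) (hfpos : ∀ᵐ x ∂μ, 0 < f x)
    (hfint : Integrable f μ) (hlint : Integrable (fun x => Real.log (f x)) μ)
    (hfmean : 0 < ∫ x, f x ∂μ)
    (g : Ω → ℝ) (hg : g = fun x => Real.log (f x) - ∫ y, Real.log (f y) ∂μ)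
    (hg2 : Integrable (fun x => (g x) ^ 2) μ) :
    |Real.log (∫ x, f x ∂μ) - ∫ x, Real.log (f x) ∂μ| ≤
      M * Real.sqrt (∫ x, (g x) ^ 2 ∂μ) / ∫ x, f x ∂μ := by
  set I : ℝ := ∫ x, f x ∂μ with hIdef
  set m : ℝ := ∫ x, Real.log (f x) ∂μ with hmdef
  have hI : 0 < I := hfmean
  have hM0 : (0:ℝ) ≤ M := le_trans zero_le_one hM
  have hgi : Integrable g μ := by
    rw [hg]; exact hlint.sub (integrable_const m)
  have habsg : Integrable (fun x => |g x|) μ := hgi.abs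
  -- integrability of f * log f
  have hbi : Integrable (fun x => M * |Real.log (f x)| + 1) μ :=
    (hlint.abs.const_mul M).add (integrable_const 1)
  have hflf : Integrable (fun x => f x * Real.log (f x)) μ := by
    refine Integrable.mono hbi (hfm.mul hfm.log).aestronglyMeasurable ?_
    filter_upwards [hfpos, hfM] with x h0 hMx
    have hMl : 0 ≤ M * |Real.log (f x)| := by positivity
    rw [Real.norm_eq_abs, Real.norm_eq_abs, abs_of_nonneg (by linarith : (0:ℝ) ≤ M * |Real.log (f x)| + 1)]
    rcases le_or_gt (f x) 1 with h1 | h1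
    · have := Real.abs_log_mul_self_lt (f x) h0 h1
      rw [mul_comm] at this
      linarith
    · have hl0 : 0 ≤ Real.log (f x) := Real.log_nonneg h1.le
      rw [abs_of_nonneg (mul_nonneg h0.le hl0), abs_of_nonneg hl0]
      nlinarith
  -- integrability of f * g
  have hfg : Integrable (fun x => f x * g x) μ := by
    rw [hg]
    have h2 : Integrable (fun x => f x * Real.log (f x) - m * f x) μ :=
      hflf.sub (hfint.const_mul m)
    refine h2.congr (Filter.Eventually.of_forall fun x => ?_)
    ring
  -- poor man's Cauchy-Schwarz: ∫|g| ≤ sqrt (∫ g²)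
  set c : ℝ := ∫ x, |g x| ∂μ with hcdef
  have hc0 : 0 ≤ c := integral_nonneg fun x => abs_nonneg _
  have hg2nn : 0 ≤ ∫ x, (g x)^2 ∂μ := integral_nonneg fun x => sq_nonneg _
  have hcs : c ≤ Real.sqrt (∫ x, (g x)^2 ∂μ) := by
    rw [Real.le_sqrt hc0 hg2nn]
    have hsubi : Integrable (fun x => (g x)^2 - (2*c) * |g x|) μ :=
      hg2.sub (habsg.const_mul (2*c))
    have h0 : 0 ≤ ∫ x, ((g x)^2 - (2*c) * |g x|) + c^2 ∂μ := by
      refine integral_nonneg fun x => ?_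
      simp only [Pi.zero_apply]
      have := sq_nonneg (|g x| - c)
      nlinarith [sq_abs (g x)]
    rw [integral_add hsubi (integrable_const _), integral_sub hg2 (habsg.const_mul (2*c)),
      integral_const_mul, integral_const, probReal_univ] at h0
    simp at h0
    nlinarith
  -- ∫ f g ≤ M * c
  have hfgle : ∫ x, f x * g x ∂μ ≤ M * c := by
    have h : ∫ x, f x * g x ∂μ ≤ ∫ x, M * |g x| ∂μ := by
      refine integral_mono_ae hfg (habsg.const_mul M) ?_
      filter_upwards [hf0, hfM] with x h0 hMx
      simp only [Pi.zero_apply] at h0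
      calc f x * g x ≤ f x * |g x| := by nlinarith [le_abs_self (g x)]
        _ ≤ M * |g x| := by nlinarith [abs_nonneg (g x)]
    rwa [integral_const_mul] at h
  -- Jensen for t log t : I * log I ≤ ∫ f log f
  have hjensen : I * Real.log I ≤ ∫ x, f x * Real.log (f x) ∂μ := by
    have hpt : ∀ᵐ x ∂μ, Real.log I * f x + (f x - I) ≤ f x * Real.log (f x) := by
      filter_upwards [hfpos] with x h0
      have hdiv : 0 < f x / I := div_pos h0 hI
      have h := Real.one_sub_inv_le_log_of_pos hdiv
      rw [Real.log_div h0.ne' hI.ne', inv_div] at h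
      have h2 := mul_le_mul_of_nonneg_left h h0.le
      have hfI : f x * (1 - I / f x) = f x - I := by field_simp
      nlinarith
    have h1i : Integrable (fun x => Real.log I * f x) μ := hfint.const_mul _
    have h2i : Integrable (fun x => f x - I) μ := hfint.sub (integrable_const I)
    have hli : Integrable (fun x => Real.log I * f x + (f x - I)) μ := h1i.add h2i
    have h := integral_mono_ae hli hflf hpt
    rw [integral_add h1i h2i, integral_const_mul, integral_sub hfint (integrable_const I),
      integral_const, probReal_univ] at h
    simp at h
    linarith
  -- ∫ f g = ∫ f log f - m * I
  have hfgval : ∫ x, f x * g x ∂μ = (∫ x, f x * Real.log (f x) ∂μ) - m * I := by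
    have heq : ∫ x, f x * g x ∂μ = ∫ x, (f x * Real.log (f x) - m * f x) ∂μ := by
      refine integral_congr_ae (Filter.Eventually.of_forall fun x => ?_)
      rw [hg]; ring
    rw [heq, integral_sub hflf (hfint.const_mul m), integral_const_mul]
  -- lower bound: m ≤ log I
  have hlow : m ≤ Real.log I := by
    have hpt : ∀ᵐ x ∂μ, Real.log (f x) ≤ Real.log I + (f x / I - 1) := by
      filter_upwards [hfpos] with x h0
      have h := Real.log_le_sub_one_of_pos (div_pos h0 hI)
      rw [Real.log_div h0.ne' hI.ne'] at h
      linarith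
    have h2i : Integrable (fun x => f x / I - 1) μ :=
      (hfint.div_const I).sub (integrable_const 1)
    have hri : Integrable (fun x => Real.log I + (f x / I - 1)) μ :=
      (integrable_const _).add h2i
    have h := integral_mono_ae hlint hri hpt
    rw [integral_add (integrable_const _) h2i, integral_const,
      integral_sub (hfint.div_const I) (integrable_const 1),
      integral_div, integral_const, probReal_univ] at h
    simp at h
    rw [div_self hI.ne'] at h
    simpa using h
  -- assemble
  rw [abs_of_nonneg (sub_nonneg.mpr hlow), le_div_iff₀ hI]
  have hkey : I * (Real.log I - m) ≤ M * Real.sqrt (∫ x, (g x)^2 ∂μ) := by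
    have h1 : I * (Real.log I - m) ≤ ∫ x, f x * g x ∂μ := by
      rw [hfgval]; nlinarith
    calc I * (Real.log I - m) ≤ ∫ x, f x * g x ∂μ := h1
      _ ≤ M * c := hfgle
      _ ≤ M * Real.sqrt (∫ x, (g x)^2 ∂μ) := by nlinarith
  linarith
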